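/- For fixed a > 0 and each n ∈ ℕ, the n-th derivative ∂ⁿ/∂xⁿ H(x;a) tends to 0 as x → ∞, where H(x;a) = e^a - (1+a/x)^x. -/
import Mathlib

open Real Filter

noncomputable def Qiter (G : ℝ → ℝ) : ℕ → ℝ → ℝ
  | 0 => G
  | n + 1 => fun y => -y ^ 2 * deriv (Qiter G n) y

lemma Qiter_analyticOnNhd {G : ℝ → ℝ} {s : Set ℝ} (hG : AnalyticOnNhd ℝ G s) (n : ℕ) :
    AnalyticOnNhd ℝ (Qiter G n) s := by
  induction n with
  | zero => exact hG
  | succ n ih =>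
    exact ((analyticOnNhd_id.pow 2).neg.mul ih.deriv)

lemma Qiter_zero {G : ℝ → ℝ} (hG : G 0 = 0) (n : ℕ) : Qiter G n 0 = 0 := by
  cases n with
  | zero => exact hG
  | succ n => simp [Qiter]

theorem stmt_19 (a : ℝ) (ha : 0 < a) (n : ℕ) :
    Filter.Tendsto
      (iteratedDeriv n (fun x : ℝ => Real.exp a - (1 + a / x) ^ x))
      Filter.atTop (nhds 0) := by
  set f : ℝ → ℝ := fun y => Real.log (1 + a * y) with hfdef
  -- f is analytic at 0
  have hfC : AnalyticAt ℂ (fun z : ℂ => Complex.log (1 + (a : ℂ) * z)) 0 := by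
    refine AnalyticAt.clog (analyticAt_const.add (analyticAt_const.mul analyticAt_id)) ?_
    simp [Complex.mem_slitPlane_iff]
  have h3 : AnalyticAt ℝ (fun y : ℝ => Complex.log (1 + (a : ℂ) * y)) 0 := by
    have h1 : AnalyticAt ℝ (fun y : ℝ => (y : ℂ)) 0 := Complex.ofRealCLM.analyticAt 0
    have h2 : AnalyticAt ℝ (fun z : ℂ => Complex.log (1 + (a : ℂ) * z)) ((fun y : ℝ => (y : ℂ)) 0) := by
      simpa using hfC.restrictScalars (𝕜 := ℝ)
    exact h2.comp h1
  have h4 : AnalyticAt ℝ (fun y : ℝ => (Complex.log (1 + (a : ℂ) * y)).re) 0 :=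
    (Complex.reCLM.analyticAt _).comp h3
  have hpos : ∀ᶠ y in nhds (0 : ℝ), 0 < 1 + a * y := by
    have hc : ContinuousAt (fun y : ℝ => 1 + a * y) 0 := by fun_prop
    have : Set.Ioi (0 : ℝ) ∈ nhds (1 + a * 0) := Ioi_mem_nhds (by norm_num)
    filter_upwards [hc.preimage_mem_nhds this] with y hy using hy
  have hf : AnalyticAt ℝ f 0 := by
    refine h4.congr ?_
    filter_upwards [hpos] with y hy
    have : ((1 : ℂ) + (a : ℂ) * y) = ((1 + a * y : ℝ) : ℂ) := by push_cast; ring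
    rw [this, ← Complex.ofReal_log hy.le, Complex.ofReal_re]
  -- f 0 = 0 and deriv f 0 = a
  have hf0 : f 0 = 0 := by simp [hfdef]
  have hfd : deriv f 0 = a := by
    have h1 : HasDerivAt (fun y : ℝ => 1 + a * y) a 0 := by
      simpa using ((hasDerivAt_id (0:ℝ)).const_mul a).const_add 1
    have h2 : HasDerivAt f ((1 + a * 0)⁻¹ * a) 0 :=
      (Real.hasDerivAt_log (by norm_num)).comp 0 h1
    simpa using h2.deriv
  -- ψ := dslope f 0 is analytic at 0
  obtain ⟨p, hp⟩ := hf
  have hψ : AnalyticAt ℝ (dslope f 0) 0 := ⟨p.fslope, hp.has_fpower_series_dslope_fslope⟩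
  set G : ℝ → ℝ := fun y => Real.exp a - Real.exp (dslope f 0 y) with hGdef
  have hG : AnalyticAt ℝ G 0 := analyticAt_const.sub hψ.rexp
  have hG0 : G 0 = 0 := by simp [hGdef, dslope_same, hfd]
  -- a ball on which G is analytic
  obtain ⟨ε, hε, hball⟩ : ∃ ε > 0, ∀ y, dist y 0 < ε → AnalyticAt ℝ G y := by
    have := hG.eventually_analyticAt
    rw [Metric.eventually_nhds_iff] at this
    obtain ⟨ε, hε, h⟩ := this
    exact ⟨ε, hε, fun y hy => h hy⟩
  have hGs : AnalyticOnNhd ℝ G (Metric.ball (0:ℝ) ε) := fun y hy => hball y (by simpa [Metric.mem_ball] using hy)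
  have hQ := Qiter_analyticOnNhd hGs
  have hεinv : 0 < ε⁻¹ := by positivity
  set H : ℝ → ℝ := fun x : ℝ => Real.exp a - (1 + a / x) ^ x with hHdef
  -- membership lemma
  have hmem : ∀ x : ℝ, ε⁻¹ < x → x⁻¹ ∈ Metric.ball (0:ℝ) ε := by
    intro x hx
    have hx0 : 0 < x := lt_trans hεinv hx
    have hlt : x⁻¹ < ε := (inv_lt_comm₀ hε hx0).mp hx
    rw [Metric.mem_ball, Real.dist_eq, sub_zero, abs_of_pos (inv_pos.mpr hx0)]
    exact hlt
  -- base identity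
  have hbase : ∀ x : ℝ, 0 < x → H x = G x⁻¹ := by
    intro x hx
    have hx' : x⁻¹ ≠ 0 := by positivity
    have h1 : (0:ℝ) < 1 + a / x := by positivity
    have hds : dslope f 0 x⁻¹ = x * Real.log (1 + a * x⁻¹) := by
      rw [dslope_of_ne f hx', slope_def_field]
      simp [hfdef, div_eq_mul_inv, inv_inv, mul_comm]
    show Real.exp a - (1 + a / x) ^ x = Real.exp a - Real.exp (dslope f 0 x⁻¹)
    rw [hds, Real.rpow_def_of_pos h1, div_eq_mul_inv, mul_comm]
  -- main identity
  have hmain : ∀ m : ℕ, ∀ x : ℝ, ε⁻¹ < x → iteratedDeriv m H x = Qiter G m x⁻¹ := by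
    intro m
    induction m with
    | zero =>
      intro x hx
      simpa [Qiter] using hbase x (lt_trans hεinv hx)
    | succ m ih =>
      intro x hx
      rw [iteratedDeriv_succ]
      have hx0 : 0 < x := lt_trans hεinv hx
      have hEq : iteratedDeriv m H =ᶠ[nhds x] fun t => Qiter G m t⁻¹ := by
        have : Set.Ioi ε⁻¹ ∈ nhds x := Ioi_mem_nhds hx
        filter_upwards [this] with t ht using ih t ht
      rw [hEq.deriv_eq]
      have hQd : HasDerivAt (Qiter G m) (deriv (Qiter G m) x⁻¹) x⁻¹ :=
        ((hQ m x⁻¹ (hmem x hx)).differentiableAt).hasDerivAt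
      have hinv : HasDerivAt (fun t : ℝ => t⁻¹) (-(x^2)⁻¹) x := hasDerivAt_inv hx0.ne'
      have := (hQd.comp x hinv).deriv
      rw [Function.comp_def] at this
      rw [this]
      show _ = -(x⁻¹)^2 * deriv (Qiter G m) x⁻¹
      rw [inv_pow]
      ring
  -- conclude
  have hEq : (fun x => Qiter G n x⁻¹) =ᶠ[atTop] iteratedDeriv n H := by
    filter_upwards [eventually_gt_atTop ε⁻¹] with x hx using (hmain n x hx).symm
  refine Tendsto.congr' hEq ?_
  have hcont : ContinuousAt (Qiter G n) 0 :=
    (hQ n 0 (by simp [hε])).continuousAt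
  have := hcont.tendsto.comp tendsto_inv_atTop_zero
  rw [Qiter_zero hG0 n] at this
  exact this
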